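/- Let n ≥ 1, let V = {1,…,n}, let E be a set of pairs (j,k) with j < k and weights w_{jk} ≥ 0, and suppose the graph G = (V,E) is bipartite. Define F : ℝ^n → ℝ by F(z_1,…,z_n) = −(1/4)·Σ_{(j,k)∈E} w_{jk}·(z_j + z_k + z_j z_k), and for 0 ≤ q ≤ ⌊n/2⌋ let F_q denote the maximum of F over z ∈ {−1,+1}^n having exactly q coordinates equal to +1, attained at some z^q. Then (1) F_0 = F_1 = ⋯ = F_{⌊n/2⌋} = (1/4)·Σ_{(j,k)∈E} w_{jk}, and (2) for every p ∈ [0,1] and every 0 ≤ q ≤ ⌊n/2⌋, F(p z^q_1,…,p z^q_n) ≥ p²·F_q. -/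

import Mathlib

noncomputable section

/-- For the bipartite traceless classical cost
`F(z) = -(1/4)Σ_{(j,k)∈E} w_{jk}(z_j + z_k + z_j z_k)`: (1) for every `q ≤ ⌊n/2⌋` the
maximum `F_q` of `F` over `±1` assignments with exactly `q` coordinates equal to `+1` is
attained and equals `(1/4)Σ w_{jk}`, and (2) any maximizer `z^q` satisfies
`F(p z^q) ≥ p² F_q` for all `p ∈ [0,1]`. -/
theorem bipartite_fixed_particle_cost_scaling
    (n : ℕ) (hn : 1 ≤ n)
    (E : Finset (Fin n × Fin n)) (hE : ∀ e ∈ E, e.1 < e.2)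
    (w : Fin n × Fin n → ℝ) (hw : ∀ e ∈ E, 0 ≤ w e)
    (A : Finset (Fin n))
    (hbip : ∀ e ∈ E, (e.1 ∈ A ∧ e.2 ∉ A) ∨ (e.1 ∉ A ∧ e.2 ∈ A))
    (F : (Fin n → ℝ) → ℝ)
    (hF : ∀ z, F z = -(1/4) * ∑ e ∈ E, w e * (z e.1 + z e.2 + z e.1 * z e.2)) :
    ∀ q : ℕ, q ≤ n / 2 →
      (IsGreatest {v : ℝ | ∃ z : Fin n → ℝ, (∀ j, z j = 1 ∨ z j = -1) ∧
          ({j : Fin n | z j = 1} : Set (Fin n)).ncard = q ∧ v = F z}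
        ((1/4) * ∑ e ∈ E, w e)) ∧
      ∀ zq : Fin n → ℝ, (∀ j, zq j = 1 ∨ zq j = -1) →
        ({j : Fin n | zq j = 1} : Set (Fin n)).ncard = q →
        (∀ z : Fin n → ℝ, (∀ j, z j = 1 ∨ z j = -1) →
          ({j : Fin n | z j = 1} : Set (Fin n)).ncard = q → F z ≤ F zq) →
        ∀ p ∈ Set.Icc (0:ℝ) 1, F (fun j => p * zq j) ≥ p ^ 2 * F zq := by
  intro q hq
  -- Upper bound: any ±1 assignment has F z ≤ (1/4) Σ w
  have key : ∀ z : Fin n → ℝ, (∀ j, z j = 1 ∨ z j = -1) →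
      F z ≤ (1/4) * ∑ e ∈ E, w e := by
    intro z hz
    rw [hF]
    have h1 : ∀ e ∈ E, -(w e) ≤ w e * (z e.1 + z e.2 + z e.1 * z e.2) := by
      intro e he
      have hw' := hw e he
      rcases hz e.1 with h1 | h1 <;> rcases hz e.2 with h2 | h2 <;>
        rw [h1, h2] <;> nlinarith
    have h2 := Finset.sum_le_sum h1
    rw [Finset.sum_neg_distrib] at h2
    linarith
  -- Construction of a witness with exactly q ones and no monochromatic edge
  have hcompl : (Aᶜ : Finset (Fin n)).card = n - A.card := by
    rw [Finset.card_compl, Fintype.card_fin]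
  have hAn : A.card ≤ n := by
    simpa using Finset.card_le_univ A
  have hcase : q ≤ A.card ∨ q ≤ (Aᶜ : Finset (Fin n)).card := by
    rw [hcompl]; omega
  obtain ⟨S, hSsub, hScard⟩ : ∃ S : Finset (Fin n), S.card = q ∧
      ∀ e ∈ E, e.1 ∉ S ∨ e.2 ∉ S := by
    rcases hcase with h | h
    · obtain ⟨S, hS, hSc⟩ := Finset.exists_subset_card_eq h
      refine ⟨S, hSc, fun e he => ?_⟩
      rcases hbip e he with ⟨_, h2⟩ | ⟨h1, _⟩
      · exact Or.inr fun hm => h2 (hS hm)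
      · exact Or.inl fun hm => h1 (hS hm)
    · obtain ⟨S, hS, hSc⟩ := Finset.exists_subset_card_eq h
      refine ⟨S, hSc, fun e he => ?_⟩
      rcases hbip e he with ⟨h1, _⟩ | ⟨_, h2⟩
      · exact Or.inl fun hm => (Finset.mem_compl.mp (hS hm)) h1
      · exact Or.inr fun hm => (Finset.mem_compl.mp (hS hm)) h2
  set z0 : Fin n → ℝ := fun j => if j ∈ S then 1 else -1 with hz0
  have hz0pm : ∀ j, z0 j = 1 ∨ z0 j = -1 := by
    intro j; by_cases h : j ∈ S <;> simp [z0, h]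
  have hz0set : ({j : Fin n | z0 j = 1} : Set (Fin n)) = ↑S := by
    ext j; by_cases h : j ∈ S <;> simp [z0, h] <;> norm_num
  have hz0card : ({j : Fin n | z0 j = 1} : Set (Fin n)).ncard = q := by
    rw [hz0set, Set.ncard_coe_finset, hSsub]
  have hz0F : F z0 = (1/4) * ∑ e ∈ E, w e := by
    rw [hF]
    have : ∑ e ∈ E, w e * (z0 e.1 + z0 e.2 + z0 e.1 * z0 e.2)
        = ∑ e ∈ E, -(w e) := by
      refine Finset.sum_congr rfl fun e he => ?_
      rcases hScard e he with h | h
      · have h1 : z0 e.1 = -1 := by simp [z0, h]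
        rw [h1]; ring
      · have h2 : z0 e.2 = -1 := by simp [z0, h]
        rw [h2]; ring
    rw [this, Finset.sum_neg_distrib]; ring
  constructor
  · constructor
    · exact ⟨z0, hz0pm, hz0card, hz0F.symm⟩
    · rintro v ⟨z, hz, _, rfl⟩
      exact key z hz
  · intro zq hzq hzqcard hmax p hp
    obtain ⟨hp0, hp1⟩ := hp
    -- the maximizer attains (1/4) Σ w
    have hFzq : F zq = (1/4) * ∑ e ∈ E, w e := by
      have h1 := key zq hzq
      have h2 := hmax z0 hz0pm hz0card
      rw [hz0F] at h2
      linarith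
    -- per-edge equality
    have hedge : ∀ e ∈ E,
        w e * (zq e.1 + zq e.2 + zq e.1 * zq e.2) = -(w e) := by
      have hsum : ∑ e ∈ E, w e * (zq e.1 + zq e.2 + zq e.1 * zq e.2)
          = ∑ e ∈ E, -(w e) := by
        have := hFzq
        rw [hF] at this
        rw [Finset.sum_neg_distrib]
        linarith
      have hle : ∀ e ∈ E, -(w e) ≤ w e * (zq e.1 + zq e.2 + zq e.1 * zq e.2) := by
        intro e he
        have hw' := hw e he
        rcases hzq e.1 with h1 | h1 <;> rcases hzq e.2 with h2 | h2 <;>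
          rw [h1, h2] <;> nlinarith
      intro e he
      exact ((Finset.sum_eq_sum_iff_of_le hle).mp hsum.symm e he).symm
    rw [hF, hF, ge_iff_le]
    have hterm : ∀ e ∈ E,
        w e * (p * zq e.1 + p * zq e.2 + (p * zq e.1) * (p * zq e.2))
          ≤ p ^ 2 * (w e * (zq e.1 + zq e.2 + zq e.1 * zq e.2)) := by
      intro e he
      have hw' := hw e he
      have heq := hedge e he
      rcases hzq e.1 with h1 | h1 <;> rcases hzq e.2 with h2 | h2 <;>
        rw [h1, h2] at heq ⊢ <;>
        nlinarith [mul_nonneg (mul_nonneg hw' hp0) (sub_nonneg.mpr hp1)]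
    have := Finset.sum_le_sum hterm
    rw [← Finset.mul_sum] at this
    nlinarith [this]

end
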